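/- arXiv:2408.04143 — 3 statements merged into one kernel-verified Lean document; each statement's English description precedes it below -/
import Mathlib

section
/- Let x₀ > 1, α > 0, and suppose there are constants C₁, C₂ > 0 such that for all x ≥ x₀ one has |∑_{n ≤ √x} μ(n)/n| ≤ C₁/(log x)^α and ∑_{n ≤ √x} |μ(n)|/n ≤ C₂ · log x. Then for all x ≥ x₀, |m₂(x)| ≤ 2^{α+1}·C₁·C₂/(log x)^{α−1} + 2^{2α}·C₁²/(log x)^{2α}. -/
open Finset ArithmeticFunction Real

/-- `m₂ x = ∑_{n ≤ x} (μ∗μ)(n)/n`, with `μ∗μ` the Dirichlet convolution of the Möbius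
function with itself. -/

noncomputable def m₂ (x : ℝ) : ℝ :=
  ∑ n ∈ Finset.Icc 1 ⌊x⌋₊, ((moebius * moebius) n : ℝ) / n

lemma m2_sum_pairs (x : ℝ) :
    m₂ x = ∑ p ∈ (Icc 1 ⌊x⌋₊ ×ˢ Icc 1 ⌊x⌋₊).filter (fun p => p.1 * p.2 ≤ ⌊x⌋₊),
      ((moebius p.1 : ℝ)/p.1) * ((moebius p.2 : ℝ)/p.2) := by
  have h1 : ∀ n ∈ Icc 1 ⌊x⌋₊, ((moebius * moebius) n : ℝ) / n
      = ∑ p ∈ n.divisorsAntidiagonal, ((moebius p.1 : ℝ)/p.1) * ((moebius p.2 : ℝ)/p.2) := by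
    intro n hn
    rw [ArithmeticFunction.mul_apply]
    push_cast
    rw [Finset.sum_div]
    refine Finset.sum_congr rfl fun p hp => ?_
    obtain ⟨hpn, hn0⟩ := Nat.mem_divisorsAntidiagonal.mp hp
    have hp1 : (p.1 : ℝ) ≠ 0 := by
      have : p.1 ≠ 0 := by rintro h; simp [h] at hpn; exact hn0 hpn.symm
      exact_mod_cast this
    have hp2 : (p.2 : ℝ) ≠ 0 := by
      have : p.2 ≠ 0 := by rintro h; simp [h] at hpn; exact hn0 hpn.symm
      exact_mod_cast this
    rw [← hpn]
    push_cast
    field_simp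
  rw [m₂, Finset.sum_congr rfl h1]
  rw [← Finset.sum_biUnion]
  · congr 1
    ext p
    simp only [Finset.mem_biUnion, Nat.mem_divisorsAntidiagonal, Finset.mem_filter,
      Finset.mem_product, Finset.mem_Icc]
    constructor
    · rintro ⟨n, hn, rfl, hne⟩
      have h1 : 1 ≤ p.1 := Nat.pos_of_ne_zero (by rintro h; simp [h] at hne)
      have h2 : 1 ≤ p.2 := Nat.pos_of_ne_zero (by rintro h; simp [h] at hne)
      refine ⟨⟨⟨h1, ?_⟩, h2, ?_⟩, hn.2⟩
      · exact le_trans (Nat.le_mul_of_pos_right _ h2) hn.2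
      · exact le_trans (Nat.le_mul_of_pos_left _ h1) hn.2
    · rintro ⟨⟨⟨h1, _⟩, h2, _⟩, hle⟩
      exact ⟨p.1 * p.2, ⟨Nat.one_le_iff_ne_zero.mpr (by positivity), hle⟩,
        rfl, by positivity⟩
  · intro a _ b _ hab
    simp only [Function.onFun]
    refine Finset.disjoint_left.mpr fun p hp hp' => ?_
    have := (Nat.mem_divisorsAntidiagonal.mp hp).1
    have := (Nat.mem_divisorsAntidiagonal.mp hp').1
    exact hab (by omega)

lemma hyperbola_identity (x : ℝ) (hx : 1 ≤ x) :
    (∑ p ∈ (Icc 1 ⌊x⌋₊ ×ˢ Icc 1 ⌊x⌋₊).filter (fun p => p.1 * p.2 ≤ ⌊x⌋₊),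
        ((moebius p.1 : ℝ)/p.1) * ((moebius p.2 : ℝ)/p.2))
      + (∑ d ∈ Icc 1 ⌊Real.sqrt x⌋₊, (moebius d : ℝ)/d)^2
    = 2 * ∑ d ∈ Icc 1 ⌊Real.sqrt x⌋₊, ((moebius d : ℝ)/d) *
        ∑ k ∈ Icc 1 (⌊x⌋₊ / d), (moebius k : ℝ)/k := by
  set N := ⌊x⌋₊ with hN
  set s := ⌊Real.sqrt x⌋₊ with hs
  set f : ℕ × ℕ → ℝ := fun p => ((moebius p.1 : ℝ)/p.1) * ((moebius p.2 : ℝ)/p.2) with hf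
  set S : Finset (ℕ × ℕ) := (Icc 1 N ×ˢ Icc 1 N).filter (fun p => p.1 * p.2 ≤ N) with hS
  have hx0 : (0:ℝ) ≤ x := le_trans zero_le_one hx
  have hsx : (s : ℝ) ≤ Real.sqrt x := Nat.floor_le (Real.sqrt_nonneg x)
  have hxs1 : x < ((s:ℝ) + 1)^2 := by
    have h := Nat.lt_floor_add_one (Real.sqrt x)
    nlinarith [Real.sq_sqrt hx0, Real.sqrt_nonneg x]
  have hss : s * s ≤ N := by
    apply Nat.le_floor
    push_cast
    nlinarith [Real.sq_sqrt hx0]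
  have hs1 : 1 ≤ s := by
    apply Nat.le_floor
    rw [Nat.cast_one]
    exact Real.one_le_sqrt.mpr hx
  have hsN : s ≤ N := le_trans (Nat.le_mul_of_pos_right s hs1) hss
  have hNlt : N < (s+1)*(s+1) := by
    have h1 : (N:ℝ) < ((s:ℝ)+1)^2 := lt_of_le_of_lt (Nat.floor_le hx0) hxs1
    have h2 : (N:ℝ) < (((s+1)*(s+1) : ℕ) : ℝ) := by push_cast; nlinarith
    exact_mod_cast h2
  classical
  set A := S.filter (fun p => p.1 ≤ s) with hA
  set B := S.filter (fun p => p.2 ≤ s) with hB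
  have hmemS : ∀ p : ℕ × ℕ, p ∈ S ↔ (1 ≤ p.1 ∧ 1 ≤ p.2 ∧ p.1 * p.2 ≤ N) := by
    intro p
    simp only [hS, Finset.mem_filter, Finset.mem_product, Finset.mem_Icc]
    constructor
    · rintro ⟨⟨⟨h1, _⟩, h2, _⟩, h3⟩; exact ⟨h1, h2, h3⟩
    · rintro ⟨h1, h2, h3⟩
      exact ⟨⟨⟨h1, le_trans (Nat.le_mul_of_pos_right _ h2) h3⟩,
        h2, le_trans (Nat.le_mul_of_pos_left _ h1) h3⟩, h3⟩
  have hunion : A ∪ B = S := by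
    ext p
    simp only [hA, hB, Finset.mem_union, Finset.mem_filter]
    constructor
    · tauto
    · intro hp
      rcases le_or_gt p.1 s with h | h
      · exact Or.inl ⟨hp, h⟩
      · refine Or.inr ⟨hp, ?_⟩
        by_contra h2
        push_neg at h2
        have hpN : p.1 * p.2 ≤ N := ((hmemS p).mp hp).2.2
        have : (s+1)*(s+1) ≤ p.1 * p.2 := Nat.mul_le_mul h h2
        omega
  have hinter : A ∩ B = Icc 1 s ×ˢ Icc 1 s := by
    ext p
    simp only [hA, hB, Finset.mem_inter, Finset.mem_filter, Finset.mem_product,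
      Finset.mem_Icc, hmemS p]
    constructor
    · rintro ⟨⟨⟨h1, _, _⟩, h4⟩, ⟨_, h2, _⟩, h5⟩; exact ⟨⟨h1, h4⟩, h2, h5⟩
    · rintro ⟨⟨h1, h4⟩, h2, h5⟩
      have : p.1 * p.2 ≤ N := le_trans (Nat.mul_le_mul h4 h5) hss
      exact ⟨⟨⟨h1, h2, this⟩, h4⟩, ⟨h1, h2, this⟩, h5⟩
  have hA_eq : ∑ p ∈ A, f p
      = ∑ d ∈ Icc 1 s, ((moebius d : ℝ)/d) * ∑ k ∈ Icc 1 (N / d), (moebius k : ℝ)/k := by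
    have hAbi : A = (Icc 1 s).biUnion (fun d => {d} ×ˢ Icc 1 (N / d)) := by
      ext p
      simp only [hA, Finset.mem_filter, Finset.mem_biUnion, Finset.mem_product,
        Finset.mem_Icc, Finset.mem_singleton, hmemS p]
      constructor
      · rintro ⟨⟨h1, h2, h3⟩, h4⟩
        exact ⟨p.1, ⟨h1, h4⟩, rfl, h2, (Nat.le_div_iff_mul_le h1).mpr (by rwa [mul_comm])⟩
      · rintro ⟨d, ⟨hd1, hd2⟩, rfl, hk1, hk2⟩
        have := (Nat.le_div_iff_mul_le hd1).mp hk2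
        exact ⟨⟨hd1, hk1, by rwa [mul_comm] at this⟩, hd2⟩
    rw [hAbi, Finset.sum_biUnion]
    · refine Finset.sum_congr rfl fun d hd => ?_
      rw [Finset.singleton_product, Finset.sum_map, Finset.mul_sum]
      rfl
    · intro a _ b _ hab
      simp only [Function.onFun]
      refine Finset.disjoint_left.mpr fun p hp hp' => ?_
      simp only [Finset.mem_product, Finset.mem_singleton] at hp hp'
      exact hab (hp.1 ▸ hp'.1 ▸ rfl)
  have hB_eq : ∑ p ∈ B, f p = ∑ p ∈ A, f p := by
    refine Finset.sum_equiv (Equiv.prodComm ℕ ℕ) (fun p => ?_) (fun p _ => ?_)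
    · simp only [hA, hB, Finset.mem_filter, hmemS, Equiv.prodComm_apply, Prod.fst_swap,
        Prod.snd_swap]
      rw [mul_comm]
      tauto
    · simp only [hf, Equiv.prodComm_apply, Prod.fst_swap, Prod.snd_swap]
      ring
  have hprod : ∑ p ∈ Icc 1 s ×ˢ Icc 1 s, f p = (∑ d ∈ Icc 1 s, (moebius d : ℝ)/d)^2 := by
    rw [sq, Finset.sum_mul_sum, Finset.sum_product]
  have key := Finset.sum_union_inter (s₁ := A) (s₂ := B) (f := f)
  rw [hunion, hinter, hprod, hB_eq, hA_eq] at key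
  linarith [key]


theorem m₂_bound_of_m_bounds (x₀ α C₁ C₂ : ℝ) (hx₀ : 1 < x₀) (hα : 0 < α)
    (hC₁ : 0 < C₁) (hC₂ : 0 < C₂)
    (h₁ : ∀ x : ℝ, x₀ ≤ x →
      |∑ n ∈ Finset.Icc 1 ⌊Real.sqrt x⌋₊, (moebius n : ℝ) / n| ≤ C₁ / Real.log x ^ α)
    (h₂ : ∀ x : ℝ, x₀ ≤ x →
      ∑ n ∈ Finset.Icc 1 ⌊Real.sqrt x⌋₊, |(moebius n : ℝ)| / n ≤ C₂ * Real.log x) :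
    ∀ x : ℝ, x₀ ≤ x →
      |m₂ x| ≤ (2 : ℝ) ^ (α + 1) * C₁ * C₂ / Real.log x ^ (α - 1) +
        (2 : ℝ) ^ (2 * α) * C₁ ^ 2 / Real.log x ^ (2 * α) := by
  intro x hx
  have hx1 : (1:ℝ) ≤ x := le_trans hx₀.le hx
  have hx1' : (1:ℝ) < x := lt_of_lt_of_le hx₀ hx
  have hx0 : (0:ℝ) ≤ x := le_trans zero_le_one hx1
  set L := Real.log x with hL
  have hL0 : 0 < L := Real.log_pos hx1'
  have hLα : 0 < L ^ α := Real.rpow_pos_of_pos hL0 α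
  -- bound on inner sums
  have hT : ∀ d ∈ Icc 1 ⌊Real.sqrt x⌋₊,
      |∑ k ∈ Icc 1 (⌊x⌋₊ / d), (moebius k : ℝ)/k| ≤ C₁ / L ^ α := by
    intro d hd
    obtain ⟨hd1, hd2⟩ := Finset.mem_Icc.mp hd
    have hd0 : (0:ℝ) < d := by exact_mod_cast hd1
    have hdsx : (d:ℝ) ≤ Real.sqrt x :=
      le_trans (Nat.cast_le.mpr hd2) (Nat.floor_le (Real.sqrt_nonneg x))
    have hxd : Real.sqrt x ≤ x / d := by
      rw [le_div_iff₀ hd0]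
      calc Real.sqrt x * d ≤ Real.sqrt x * Real.sqrt x := by
            gcongr
        _ = x := Real.mul_self_sqrt hx0
    have hy : x ≤ (x / d)^2 := by
      calc x = Real.sqrt x * Real.sqrt x := (Real.mul_self_sqrt hx0).symm
        _ ≤ (x/d) * (x/d) := by
            have := Real.sqrt_nonneg x
            nlinarith
        _ = (x/d)^2 := (sq (x/d)).symm
    have hy₀ : x₀ ≤ (x / d)^2 := le_trans hx hy
    have hfl : ⌊Real.sqrt ((x/d)^2)⌋₊ = ⌊x⌋₊ / d := by
      rw [Real.sqrt_sq (by positivity), Nat.floor_div_natCast]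
    have hb := h₁ ((x/d)^2) hy₀
    rw [hfl] at hb
    refine le_trans hb ?_
    have hlog : L ≤ Real.log ((x/d)^2) := Real.log_le_log (by positivity) hy
    have h1 : L ^ α ≤ Real.log ((x/d)^2) ^ α :=
      Real.rpow_le_rpow hL0.le hlog hα.le
    exact div_le_div_of_nonneg_left hC₁.le hLα h1
  have hkey := hyperbola_identity x hx1
  rw [← m2_sum_pairs x] at hkey
  set M := ∑ d ∈ Icc 1 ⌊Real.sqrt x⌋₊, (moebius d : ℝ)/d with hM
  set Tsum := ∑ d ∈ Icc 1 ⌊Real.sqrt x⌋₊, ((moebius d : ℝ)/d) *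
      ∑ k ∈ Icc 1 (⌊x⌋₊ / d), (moebius k : ℝ)/k with hTs
  have hMb : |M| ≤ C₁ / L ^ α := h₁ x hx
  have hTsum : |Tsum| ≤ (C₂ * L) * (C₁ / L ^ α) := by
    calc |Tsum| ≤ ∑ d ∈ Icc 1 ⌊Real.sqrt x⌋₊,
          |((moebius d : ℝ)/d) * ∑ k ∈ Icc 1 (⌊x⌋₊ / d), (moebius k : ℝ)/k| :=
        Finset.abs_sum_le_sum_abs _ _
      _ ≤ ∑ d ∈ Icc 1 ⌊Real.sqrt x⌋₊, (|(moebius d : ℝ)|/d) * (C₁ / L ^ α) := by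
        refine Finset.sum_le_sum fun d hd => ?_
        rw [abs_mul, abs_div, Nat.abs_cast]
        exact mul_le_mul_of_nonneg_left (hT d hd) (by positivity)
      _ = (∑ d ∈ Icc 1 ⌊Real.sqrt x⌋₊, |(moebius d : ℝ)|/d) * (C₁ / L ^ α) :=
        (Finset.sum_mul _ _ _).symm
      _ ≤ (C₂ * L) * (C₁ / L ^ α) :=
        mul_le_mul_of_nonneg_right (h₂ x hx) (by positivity)
  have habs : |m₂ x| ≤ 2 * ((C₂ * L) * (C₁ / L ^ α)) + (C₁ / L ^ α)^2 := by
    have hm : m₂ x = 2 * Tsum - M ^ 2 := by linarith [hkey]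
    rw [hm, sub_eq_add_neg]
    calc |2 * Tsum + -(M^2)| ≤ |2 * Tsum| + |-(M^2)| := abs_add_le _ _
      _ = 2 * |Tsum| + M^2 := by rw [abs_neg, abs_mul, abs_two, abs_pow, sq_abs]
      _ ≤ 2 * ((C₂ * L) * (C₁ / L ^ α)) + (C₁ / L ^ α)^2 := by
        have h1 : M^2 ≤ (C₁ / L ^ α)^2 := by
          rw [← sq_abs]
          exact pow_le_pow_left₀ (abs_nonneg _) hMb 2
        linarith [hTsum]
  refine le_trans habs ?_
  have hLα0 : L ^ α ≠ 0 := ne_of_gt hLα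
  have hL0' : L ≠ 0 := ne_of_gt hL0
  have h2le : (2:ℝ) ≤ 2 ^ (α+1) := by
    calc (2:ℝ) = 2 ^ (1:ℝ) := (Real.rpow_one 2).symm
      _ ≤ 2 ^ (α+1) := Real.rpow_le_rpow_of_exponent_le one_le_two (by linarith)
  have h1le : (1:ℝ) ≤ 2 ^ (2*α) := by
    calc (1:ℝ) = 2 ^ (0:ℝ) := (Real.rpow_zero 2).symm
      _ ≤ 2 ^ (2*α) := Real.rpow_le_rpow_of_exponent_le one_le_two (by linarith)
  have e1 : L ^ (α-1) = L ^ α / L := by rw [Real.rpow_sub hL0, Real.rpow_one]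
  have e2 : L ^ (2*α) = L ^ α * L ^ α := by rw [two_mul, Real.rpow_add hL0]
  rw [e1, e2]
  have eq1 : (2:ℝ)^(α+1) * C₁ * C₂ / (L ^ α / L) = 2^(α+1) * ((C₂ * L) * (C₁ / L ^ α)) := by
    field_simp
  have eq2 : (2:ℝ)^(2*α) * C₁^2 / (L ^ α * L ^ α) = 2^(2*α) * (C₁ / L ^ α)^2 := by
    field_simp
  rw [eq1, eq2]
  have hpos1 : 0 ≤ (C₂ * L) * (C₁ / L ^ α) := by positivity
  have hpos2 : 0 ≤ (C₁ / L ^ α)^2 := by positivity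
  nlinarith [mul_le_mul_of_nonneg_right h2le hpos1, mul_le_mul_of_nonneg_right h1le hpos2]
end

section
/- Let a > 1 and α > 0 be real numbers. For all x ≥ a, ∫_a^x dt/(log t)^α ≤ C_α · x/(log x)^α, where C_α = α^{−1} · ( α/(e·log a)^{α/(α+1)} + α^{1/(α+1)} )^{α+1}. -/
open Real

private lemma log_le_div_e {z : ℝ} (hz : 0 < z) : Real.log z ≤ z / Real.exp 1 := by
  have h := Real.log_le_sub_one_of_pos (div_pos hz (Real.exp_pos 1))
  rw [Real.log_div hz.ne' (Real.exp_pos 1).ne', Real.log_exp] at h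
  linarith

private lemma intInt {b c α : ℝ} (hb : 1 < b) (hbc : b ≤ c) :
    IntervalIntegrable (fun t => 1 / Real.log t ^ α) MeasureTheory.volume b c := by
  apply ContinuousOn.intervalIntegrable
  rw [Set.uIcc_of_le hbc]
  intro t ht
  have h1 : (1:ℝ) < t := lt_of_lt_of_le hb ht.1
  have hlt : 0 < Real.log t := Real.log_pos h1
  apply ContinuousAt.continuousWithinAt
  exact ContinuousAt.div continuousAt_const
    ((Real.continuousAt_rpow_const _ _ (Or.inl hlt.ne')).comp
      (Real.continuousAt_log (by linarith)))
    (ne_of_gt (Real.rpow_pos_of_pos hlt α))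

private lemma integral_le_const {b c α : ℝ} (hb : 1 < b) (hbc : b ≤ c) (hα : 0 ≤ α) :
    (∫ t in b..c, 1 / Real.log t ^ α) ≤ (c - b) * (1 / Real.log b ^ α) := by
  have hlb : 0 < Real.log b := Real.log_pos hb
  have h := intervalIntegral.integral_mono_on hbc (intInt hb hbc)
    (intervalIntegrable_const (c := 1 / Real.log b ^ α)) (fun t ht => by
      have h1 : Real.log b ≤ Real.log t := Real.log_le_log (by linarith) ht.1
      have h2 : Real.log b ^ α ≤ Real.log t ^ α := Real.rpow_le_rpow hlb.le h1 hα
      exact one_div_le_one_div_of_le (Real.rpow_pos_of_pos hlb α) h2)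
  simpa using h

private lemma const_eq {L α : ℝ} (hL : 0 < L) (hα : 0 < α) :
    α⁻¹ * (α / (Real.exp 1 * L) ^ (α / (α + 1)) + α ^ (1 / (α + 1))) ^ (α + 1)
      = (1 + (α / (Real.exp 1 * L)) ^ (α / (α + 1))) ^ (α + 1) := by
  have hE : 0 < Real.exp 1 * L := mul_pos (Real.exp_pos 1) hL
  have hsum : 1 / (α + 1) + α / (α + 1) = 1 := by field_simp; ring
  have h1 : α / (Real.exp 1 * L) ^ (α / (α + 1)) + α ^ (1 / (α + 1))
      = α ^ (1 / (α + 1)) * ((α / (Real.exp 1 * L)) ^ (α / (α + 1)) + 1) := by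
    rw [mul_add, mul_one, Real.div_rpow hα.le hE.le, ← mul_div_assoc,
      ← Real.rpow_add hα, hsum, Real.rpow_one]
  rw [h1, Real.mul_rpow (Real.rpow_nonneg hα.le _) (by positivity),
    ← Real.rpow_mul hα.le]
  have : 1 / (α + 1) * (α + 1) = 1 := by field_simp
  rw [this, Real.rpow_one, ← mul_assoc, inv_mul_cancel₀ hα.ne', one_mul, add_comm]

set_option maxHeartbeats 1000000 in
theorem integral_one_div_log_rpow_le (a α : ℝ) (ha : 1 < a) (hα : 0 < α) :
    ∀ x : ℝ, a ≤ x →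
      (∫ t in a..x, 1 / Real.log t ^ α) ≤
        (α⁻¹ * (α / (Real.exp 1 * Real.log a) ^ (α / (α + 1)) + α ^ (1 / (α + 1))) ^ (α + 1)) *
          x / Real.log x ^ α := by
  intro x hx
  have hL : 0 < Real.log a := Real.log_pos ha
  rw [const_eq hL hα]
  set L := Real.log a with hLdef
  have hx1 : 1 < x := lt_of_lt_of_le ha hx
  have hx0 : 0 < x := by linarith
  have hG : 0 < Real.log x := Real.log_pos hx1
  have hGα : 0 < Real.log x ^ α := Real.rpow_pos_of_pos hG α
  have hLα : 0 < L ^ α := Real.rpow_pos_of_pos hL α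
  have hE : 0 < Real.exp 1 * L := mul_pos (Real.exp_pos 1) hL
  set u := α / (Real.exp 1 * L) with hudef
  have hu : 0 < u := div_pos hα hE
  set v := u ^ (α / (α + 1)) with hvdef
  have hv : 0 < v := Real.rpow_pos_of_pos hu _
  have h1v : (0:ℝ) < 1 + v := by linarith
  have hpvα : (0:ℝ) < (1 + v) ^ α := Real.rpow_pos_of_pos h1v α
  set θ := (1 + v)⁻¹ with hθdef
  have hθ0 : 0 < θ := inv_pos.mpr h1v
  clear_value L u v θ
  have hθ1 : θ < 1 := by
    rw [hθdef]
    rw [inv_lt_one_iff₀]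
    right; linarith
  have hε : 0 < 1 - θ := by linarith
  have hθα : θ ^ α = ((1 + v) ^ α)⁻¹ := by
    rw [hθdef, ← Real.inv_rpow h1v.le]
  -- key rpow identity
  have hone : (1:ℝ) - α / (α + 1) = 1 / (α + 1) := by field_simp; ring
  have huv : u / v = u ^ (1 / (α + 1)) := by
    rw [← hone, Real.rpow_sub hu, Real.rpow_one, hvdef]
  have huv2 : (u / v) ^ α = v := by
    rw [huv, ← Real.rpow_mul hu.le, hvdef, div_mul_eq_mul_div, one_mul]
  have hK : (u * (1 + v) / v) ^ α = v * (1 + v) ^ α := by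
    have : u * (1 + v) / v = u / v * (1 + v) := by ring
    rw [this, Real.mul_rpow (by positivity) h1v.le, huv2]
  -- log bound
  have hlogb : Real.log x ≤ α / ((1 - θ) * Real.exp 1) * x ^ ((1 - θ) / α) := by
    have h1 := log_le_div_e (Real.rpow_pos_of_pos hx0 ((1 - θ) / α))
    rw [Real.log_rpow hx0] at h1
    rw [div_mul_eq_mul_div, div_le_div_iff₀ hα (Real.exp_pos 1)] at h1
    rw [div_mul_eq_mul_div, le_div_iff₀ (by positivity)]
    nlinarith [h1]
  have hGb : Real.log x ^ α ≤ (α / ((1 - θ) * Real.exp 1)) ^ α * x ^ (1 - θ) := by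
    have h2 := Real.rpow_le_rpow hG.le hlogb hα.le
    rwa [Real.mul_rpow (by positivity) (Real.rpow_nonneg hx0.le _),
      ← Real.rpow_mul hx0.le, div_mul_cancel₀ _ hα.ne'] at h2
  have hε_eq : 1 - θ = v / (1 + v) := by rw [hθdef]; field_simp; ring
  have hconst : α / ((1 - θ) * Real.exp 1) = L * (u * (1 + v) / v) := by
    rw [hε_eq, hudef]; field_simp
  have hconstα : (α / ((1 - θ) * Real.exp 1)) ^ α = L ^ α * (v * (1 + v) ^ α) := by
    rw [hconst, Real.mul_rpow hL.le (by positivity), hK]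
  have hGb2 : Real.log x ^ α ≤ L ^ α * (v * (1 + v) ^ α) * x ^ (1 - θ) := by
    rw [hconstα] at hGb; exact hGb
  by_cases hcase : a ≤ x ^ θ
  · set y := x ^ θ with hy
    have hy1 : 1 < y := lt_of_lt_of_le ha hcase
    have hy0 : 0 < y := by linarith
    have hyx : y ≤ x := by
      calc y = x ^ θ := rfl
        _ ≤ x ^ (1:ℝ) := Real.rpow_le_rpow_of_exponent_le hx1.le hθ1.le
        _ = x := Real.rpow_one x
    have hsplit : (∫ t in a..x, 1 / Real.log t ^ α)
        = (∫ t in a..y, 1 / Real.log t ^ α) + ∫ t in y..x, 1 / Real.log t ^ α :=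
      (intervalIntegral.integral_add_adjacent_intervals (intInt ha hcase) (intInt hy1 hyx)).symm
    have hb1 := integral_le_const ha hcase (α := α) hα.le
    rw [← hLdef] at hb1
    have hb2 := integral_le_const hy1 hyx (α := α) hα.le
    have hlogy : Real.log y ^ α = θ ^ α * Real.log x ^ α := by
      rw [hy, Real.log_rpow hx0, Real.mul_rpow hθ0.le hG.le]
    have hxsplit : x ^ (1 - θ) * y = x := by
      rw [hy, ← Real.rpow_add hx0]
      norm_num
    have hGximp : Real.log x ^ α * y ≤ L ^ α * (v * (1 + v) ^ α) * x := by
      calc Real.log x ^ α * y ≤ L ^ α * (v * (1 + v) ^ α) * x ^ (1 - θ) * y :=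
            mul_le_mul_of_nonneg_right hGb2 hy0.le
        _ = L ^ α * (v * (1 + v) ^ α) * x := by rw [mul_assoc, hxsplit]
    have hA : (y - a) * (1 / L ^ α) ≤ x * (v * (1 + v) ^ α) / Real.log x ^ α := by
      rw [mul_one_div, div_le_div_iff₀ hLα hGα]
      have h5 : (y - a) * Real.log x ^ α ≤ y * Real.log x ^ α :=
        mul_le_mul_of_nonneg_right (sub_le_self y (le_of_lt (lt_trans zero_lt_one ha))) hGα.le
      linarith [hGximp]
    have hB : (x - y) * (1 / Real.log y ^ α) ≤ x * (1 + v) ^ α / Real.log x ^ α := by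
      rw [hlogy, hθα, mul_one_div, div_le_div_iff₀ (by positivity) hGα]
      have h7 : x * (1 + v) ^ α * (((1 + v) ^ α)⁻¹ * Real.log x ^ α)
          = x * Real.log x ^ α := by field_simp
      rw [h7]
      have h8 : (x - y) * Real.log x ^ α ≤ x * Real.log x ^ α :=
        mul_le_mul_of_nonneg_right (sub_le_self x hy0.le) hGα.le
      linarith
    have hfin : x * (v * (1 + v) ^ α) / Real.log x ^ α + x * (1 + v) ^ α / Real.log x ^ α
        = (1 + v) ^ (α + 1) * x / Real.log x ^ α := by
      rw [Real.rpow_add h1v α 1, Real.rpow_one]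
      ring
    linarith [hsplit, hb1, hb2, hA, hB, hfin.le, hfin.ge]
  · push_neg at hcase
    have hlogx : Real.log x < L * (1 + v) := by
      have h8 : Real.log (x ^ θ) < Real.log a := Real.log_lt_log (Real.rpow_pos_of_pos hx0 θ) hcase
      rw [Real.log_rpow hx0, hθdef, ← hLdef] at h8
      have h8b := mul_lt_mul_of_pos_left h8 h1v
      rw [← mul_assoc, mul_inv_cancel₀ h1v.ne', one_mul] at h8b
      linarith
    have h9 : Real.log x ^ α ≤ L ^ α * (1 + v) ^ (α + 1) := by
      calc Real.log x ^ α ≤ (L * (1 + v)) ^ α := Real.rpow_le_rpow hG.le hlogx.le hα.le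
        _ = L ^ α * (1 + v) ^ α := Real.mul_rpow hL.le h1v.le
        _ ≤ L ^ α * (1 + v) ^ (α + 1) := by
            have := Real.rpow_le_rpow_of_exponent_le (by linarith : (1:ℝ) ≤ 1 + v)
              (by linarith : α ≤ α + 1)
            nlinarith [hLα]
    have htriv := integral_le_const ha hx (α := α) hα.le
    rw [← hLdef] at htriv
    have h6 : (x - a) * (1 / L ^ α) ≤ (1 + v) ^ (α + 1) * x / Real.log x ^ α := by
      rw [mul_one_div, div_le_div_iff₀ hLα hGα]
      nlinarith [mul_le_mul_of_nonneg_left h9 hx0.le,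
        mul_pos (lt_trans zero_lt_one ha) hGα]
    linarith [htriv, h6]
end

section
/- For every real number a > 2 there exists a constant C > 0 such that for all x ≥ 2, ∑_{m ≤ x, gcd(m, P(a)) = 1} a^{Ω(m)}/m ≤ C·(log x)^a, where P(a) denotes the product of all primes p ≤ a. -/
open Finset ArithmeticFunction

private lemma log_inv_one_sub_le {s K : ℝ} (hs : 0 ≤ s) (hs1 : s < 1) (hK : 1 ≤ K * (1 - s)) :
    Real.log (1 - s)⁻¹ ≤ s + K * s ^ 2 := by
  have h1s : (0:ℝ) < 1 - s := by linarith
  have hK0 : 0 ≤ K := by nlinarith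
  rw [Real.log_inv, neg_le, Real.le_log_iff_exp_le h1s]
  have hy : (0:ℝ) ≤ s + K * s ^ 2 := by positivity
  have h2 : Real.exp (-(s + K * s ^ 2)) ≤ (1 + (s + K * s ^ 2))⁻¹ := by
    rw [Real.exp_neg]
    exact inv_anti₀ (by positivity) (by linarith [Real.add_one_le_exp (s + K * s ^ 2)])
  refine h2.trans ?_
  rw [inv_le_comm₀ (by positivity) h1s, inv_le_iff_one_le_mul₀ h1s]
  nlinarith

private lemma sq_inv_sum_le (M : ℕ) : ∑ k ∈ Icc 2 M, ((k:ℝ)⁻¹) ^ 2 ≤ 1 := by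
  have H : ∀ M : ℕ, 1 ≤ M → ∑ k ∈ Icc 2 M, ((k:ℝ)⁻¹) ^ 2 ≤ 1 - (M:ℝ)⁻¹ := by
    intro M hM
    induction M with
    | zero => omega
    | succ n ih =>
      rcases Nat.eq_or_lt_of_le hM with h1 | h2
      · simp [← h1]
      · have hn : 1 ≤ n := by omega
        rw [Finset.sum_Icc_succ_top (by omega)]
        have hnR : (1:ℝ) ≤ n := by exact_mod_cast hn
        have h3 : (((n:ℕ)+1:ℕ):ℝ)⁻¹ ^ 2 ≤ (n:ℝ)⁻¹ - ((n:ℝ)+1)⁻¹ := by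
          have he : (n:ℝ)⁻¹ - ((n:ℝ)+1)⁻¹ = ((n:ℝ)*((n:ℝ)+1))⁻¹ := by
            field_simp
            ring
          push_cast
          rw [he, inv_pow]
          exact inv_anti₀ (by positivity) (by nlinarith)
        have h4 := ih hn
        have : (((n:ℕ)+1:ℕ):ℝ)⁻¹ = ((n:ℝ)+1)⁻¹ := by push_cast; ring
        push_cast at *
        linarith
  rcases Nat.lt_or_ge M 1 with h | h
  · interval_cases M <;> simp
  · refine (H M h).trans ?_
    have : (0:ℝ) ≤ (M:ℝ)⁻¹ := by positivity
    linarith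

private lemma prodPowDvd (s : Finset ℕ) (hs : ∀ p ∈ s, p.Prime) (e : ℕ → ℕ) (n : ℕ)
    (h : ∀ p ∈ s, p ^ e p ∣ n) : (∏ p ∈ s, p ^ e p) ∣ n := by
  induction s using Finset.induction_on with
  | empty => simpa using one_dvd n
  | @insert a t hat ih =>
    rw [Finset.prod_insert hat]
    have hcop : Nat.Coprime (a ^ e a) (∏ p ∈ t, p ^ e p) := by
      apply Nat.Coprime.pow_left
      apply Nat.Coprime.prod_right
      intro q hq
      exact Nat.Coprime.pow_right _ ((Nat.coprime_primes (hs a (mem_insert_self a t))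
        (hs q (mem_insert_of_mem hq))).mpr (fun hne => hat (hne ▸ hq)))
    exact hcop.mul_dvd_of_dvd_of_dvd (h a (mem_insert_self a t))
      (ih (fun p hp => hs p (mem_insert_of_mem hp)) (fun p hp => h p (mem_insert_of_mem hp)))

private noncomputable def mc (k : ℕ) : ℝ := if k.Prime then Real.log k / k else 0

private lemma mc_nonneg (k : ℕ) : 0 ≤ mc k := by
  unfold mc
  split
  · have : (1:ℝ) ≤ k := by exact_mod_cast (by assumption : Nat.Prime k).one_lt.le
    have := Real.log_nonneg this
    positivity
  · exact le_refl 0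

private lemma mertens1 (n : ℕ) (hn : 1 ≤ n) :
    ∑ k ∈ Icc 0 n, mc k ≤ Real.log n + Real.log 4 := by
  classical
  set s := (range (n+1)).filter Nat.Prime with hs
  have hprime : ∀ p ∈ s, Nat.Prime p := fun p hp => (mem_filter.mp hp).2
  have hple : ∀ p ∈ s, p ≤ n := fun p hp => Nat.lt_succ_iff.mp (mem_range.mp (mem_filter.mp hp).1)
  have hconv : ∑ k ∈ Icc 0 n, mc k = ∑ p ∈ s, Real.log p / p := by
    rw [hs, Finset.sum_filter, ← Nat.Ico_zero_eq_range, Finset.Ico_add_one_right_eq_Icc]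
    exact Finset.sum_congr rfl (fun k _ => rfl)
  -- divisibility
  have hdvd : (∏ p ∈ s, p ^ (n / p)) ∣ Nat.factorial n := by
    refine prodPowDvd s hprime _ _ (fun p hp => ?_)
    have hp' := hprime p hp
    rw [Nat.Prime.pow_dvd_factorial_iff hp' (Nat.lt_succ_self _)]
    calc n / p = n / p ^ 1 := by rw [pow_one]
      _ ≤ ∑ i ∈ Ico 1 (Nat.log p n + 1), n / p ^ i := by
          refine Finset.single_le_sum (f := fun i => n / p ^ i) (fun i _ => Nat.zero_le _) ?_
          rw [mem_Ico]
          exact ⟨le_refl 1, by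
            have := Nat.log_pos hp'.one_lt (hple p hp)
            omega⟩
  have h1 : (∏ p ∈ s, p ^ (n / p)) ≤ Nat.factorial n := Nat.le_of_dvd n.factorial_pos hdvd
  have h2 : Nat.factorial n ≤ n ^ n := Nat.factorial_le_pow n
  have hDR : (∏ p ∈ s, (p:ℝ) ^ (n / p)) ≤ (n:ℝ) ^ n := by
    exact_mod_cast h1.trans h2
  have hlogD : ∑ p ∈ s, ((n / p : ℕ) : ℝ) * Real.log p ≤ (n:ℝ) * Real.log n := by
    have hpos : ∀ p ∈ s, (0:ℝ) < (p:ℝ) ^ (n / p) := fun p hp => by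
      have := (hprime p hp).pos
      positivity
    calc ∑ p ∈ s, ((n / p : ℕ) : ℝ) * Real.log p
        = Real.log (∏ p ∈ s, (p:ℝ) ^ (n / p)) := by
          rw [Real.log_prod (fun p hp => (hpos p hp).ne')]
          exact Finset.sum_congr rfl (fun p hp => by rw [Real.log_pow])
      _ ≤ Real.log ((n:ℝ) ^ n) := Real.log_le_log (Finset.prod_pos hpos) hDR
      _ = (n:ℝ) * Real.log n := by rw [Real.log_pow]
  have htheta : ∑ p ∈ s, Real.log p ≤ (n:ℝ) * Real.log 4 := by
    have hprim := primorial_le_4_pow n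
    have hprimeq : primorial n = ∏ p ∈ s, p := rfl
    have hR : (∏ p ∈ s, (p:ℝ)) ≤ (4:ℝ) ^ n := by
      rw [← Nat.cast_prod]
      exact_mod_cast hprimeq ▸ hprim
    calc ∑ p ∈ s, Real.log p
        = Real.log (∏ p ∈ s, (p:ℝ)) := by
          rw [Real.log_prod (fun p hp => by exact_mod_cast (hprime p hp).pos.ne')]
      _ ≤ Real.log ((4:ℝ) ^ n) := Real.log_le_log (Finset.prod_pos fun p hp => by
            exact_mod_cast (hprime p hp).pos) hR
      _ = (n:ℝ) * Real.log 4 := by rw [Real.log_pow]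
  have hpt : ∀ p ∈ s, (n:ℝ) * (Real.log p / p) ≤ ((n / p : ℕ) : ℝ) * Real.log p + Real.log p := by
    intro p hp
    have hp' := hprime p hp
    have hppos : (0:ℝ) < p := by exact_mod_cast hp'.pos
    have hlogp : 0 ≤ Real.log p := Real.log_nonneg (by exact_mod_cast hp'.one_lt.le)
    have hfl : (n:ℝ) / p ≤ ((n / p : ℕ) : ℝ) + 1 := by
      rw [div_le_iff₀ hppos]
      have hmod := Nat.div_add_mod n p
      have hlt := Nat.mod_lt n hp'.pos
      have hexp : (n / p + 1) * p = p * (n / p) + p := by ring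
      have : n < (n / p + 1) * p := by omega
      calc (n:ℝ) ≤ ((n / p + 1) * p : ℕ) := by exact_mod_cast this.le
        _ = (((n/p:ℕ):ℝ) + 1) * p := by push_cast; ring
    calc (n:ℝ) * (Real.log p / p) = ((n:ℝ) / p) * Real.log p := by ring
      _ ≤ (((n / p : ℕ) : ℝ) + 1) * Real.log p := by
          exact mul_le_mul_of_nonneg_right hfl hlogp
      _ = ((n / p : ℕ) : ℝ) * Real.log p + Real.log p := by ring
  have hnR : (0:ℝ) < n := by exact_mod_cast hn
  rw [hconv]
  rw [← mul_le_mul_iff_right₀ hnR, Finset.mul_sum]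
  calc ∑ p ∈ s, (n:ℝ) * (Real.log p / p)
      ≤ ∑ p ∈ s, (((n / p : ℕ) : ℝ) * Real.log p + Real.log p) := Finset.sum_le_sum hpt
    _ = (∑ p ∈ s, ((n / p : ℕ) : ℝ) * Real.log p) + ∑ p ∈ s, Real.log p := Finset.sum_add_distrib
    _ ≤ (n:ℝ) * Real.log n + (n:ℝ) * Real.log 4 := add_le_add hlogD htheta
    _ = (n:ℝ) * (Real.log n + Real.log 4) := by ring

private noncomputable def K2 : ℝ :=
  1 + Real.log 4 / Real.log 2 +
    (Real.log 4 / Real.log (3/2) - Real.log (Real.log (3/2)))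

private lemma mertens2 (x : ℝ) (hx : 2 ≤ x) :
    ∑ k ∈ Icc 0 ⌊x⌋₊, (if k.Prime then (k:ℝ)⁻¹ else 0) ≤
      Real.log (Real.log x) + K2 := by
  classical
  set f : ℝ → ℝ := fun y => (Real.log y)⁻¹ with hf
  set A : ℝ → ℝ := fun t => ∑ k ∈ Icc 0 ⌊t⌋₊, mc k with hA
  have hlog32 : (0:ℝ) < Real.log (3/2) := Real.log_pos (by norm_num)
  have hlog2 : (0:ℝ) < Real.log 2 := Real.log_pos (by norm_num)
  have hlog4 : (0:ℝ) ≤ Real.log 4 := Real.log_nonneg (by norm_num)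
  have hlogt : ∀ t : ℝ, 3/2 ≤ t → 0 < Real.log t := fun t ht =>
    Real.log_pos (by linarith)
  -- derivative of f
  have hfd : ∀ t : ℝ, 3/2 ≤ t → HasDerivAt f (-(t⁻¹) / (Real.log t)^2) t := by
    intro t ht
    have ht0 : t ≠ 0 := by positivity
    exact (Real.hasDerivAt_log ht0).inv (hlogt t ht).ne'
  have hfderiv : ∀ t : ℝ, 3/2 ≤ t → deriv f t = -(t⁻¹) / (Real.log t)^2 :=
    fun t ht => (hfd t ht).deriv
  have hf_diff : ∀ t ∈ Set.Icc (3/2:ℝ) x, DifferentiableAt ℝ f t :=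
    fun t ht => (hfd t ht.1).differentiableAt
  have hg0 : ContinuousOn (fun t : ℝ => -(t⁻¹) / (Real.log t)^2) (Set.Icc (3/2:ℝ) x) := by
    have hne : ∀ t ∈ Set.Icc (3/2:ℝ) x, t ≠ 0 := fun t ht => by
      have := ht.1; intro h; rw [h] at this; linarith
    refine ((continuousOn_id.inv₀ hne).neg).div
      ((Real.continuousOn_log.mono ?_).pow 2) ?_
    · intro t ht; exact hne t ht
    · intro t ht; exact pow_ne_zero 2 (hlogt t ht.1).ne'

  have hf_int : MeasureTheory.IntegrableOn (deriv f) (Set.Icc (3/2:ℝ) x) :=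
    (hg0.integrableOn_Icc).congr_fun (fun t ht => (hfderiv t ht.1).symm) measurableSet_Icc
  have h32x : (3/2:ℝ) ≤ x := by linarith
  have habel := sum_mul_eq_sub_sub_integral_mul mc (f := f) (by norm_num : (0:ℝ) ≤ 3/2)
    h32x hf_diff hf_int
  have hfloor32 : ⌊(3/2:ℝ)⌋₊ = 1 := by
    rw [Nat.floor_eq_iff (by norm_num)]
    norm_num
  rw [show ⌊(3/2:ℝ)⌋₊ = 1 from hfloor32] at habel
  have habel' : ∑ k ∈ Ioc 1 ⌊x⌋₊, f k * mc k =
      f x * A x - f (3/2) * (∑ k ∈ Icc 0 1, mc k) -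
        ∫ t in Set.Ioc (3/2:ℝ) x, deriv f t * A t := habel
  have hA32 : (∑ k ∈ Icc 0 1, mc k) = 0 := by
    rw [show (Icc 0 1 : Finset ℕ) = {0, 1} from rfl]
    simp [mc, Nat.not_prime_zero, Nat.not_prime_one]
  have hAnonneg : ∀ t : ℝ, 0 ≤ A t := fun t => Finset.sum_nonneg fun k _ => mc_nonneg k
  have hAle : ∀ t : ℝ, 3/2 ≤ t → A t ≤ Real.log t + Real.log 4 := by
    intro t ht
    have ht0 : (0:ℝ) < t := by linarith
    have hfl1 : 1 ≤ ⌊t⌋₊ := Nat.le_floor (by exact_mod_cast (by linarith : (1:ℝ) ≤ t))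
    have h1 := mertens1 ⌊t⌋₊ hfl1
    refine h1.trans ?_
    have : Real.log (⌊t⌋₊ : ℝ) ≤ Real.log t :=
      Real.log_le_log (by exact_mod_cast hfl1) (Nat.floor_le ht0.le)
    linarith
  -- integral bound
  set G : ℝ → ℝ := fun t => Real.log (Real.log t) - Real.log 4 * (Real.log t)⁻¹ with hG
  set h : ℝ → ℝ := fun t => (Real.log t + Real.log 4) / (t * (Real.log t)^2) with hh
  have hGd : ∀ t : ℝ, 3/2 ≤ t → HasDerivAt G (h t) t := by
    intro t ht
    have ht0 : t ≠ 0 := by intro h0; rw [h0] at ht; norm_num at ht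
    have hlt := hlogt t ht
    have h1 : HasDerivAt (fun y : ℝ => Real.log (Real.log y)) ((Real.log t)⁻¹ * t⁻¹) t :=
      (Real.hasDerivAt_log hlt.ne').comp t (Real.hasDerivAt_log ht0)
    have h2 : HasDerivAt (fun y : ℝ => Real.log 4 * (Real.log y)⁻¹)
        (Real.log 4 * (-(t⁻¹) / (Real.log t)^2)) t := (hfd t ht).const_mul (Real.log 4)
    have h3 := h1.sub h2
    refine h3.congr_deriv ?_
    rw [hh]
    have hlt' : Real.log t ≠ 0 := hlt.ne'
    field_simp
    ring
  have hhcont : ContinuousOn h (Set.Icc (3/2:ℝ) x) := by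
    have hne : ∀ t ∈ Set.Icc (3/2:ℝ) x, t ≠ 0 := fun t ht => by
      have := ht.1; intro h0; rw [h0] at this; linarith
    refine ContinuousOn.div ((Real.continuousOn_log.mono hne).add continuousOn_const)
      (continuousOn_id.mul ((Real.continuousOn_log.mono hne).pow 2)) ?_
    intro t ht
    have := hlogt t ht.1
    have ht0 : (0:ℝ) < t := by linarith [ht.1]
    positivity
  have hFTC : ∫ t in (3/2:ℝ)..x, h t = G x - G (3/2) := by
    refine intervalIntegral.integral_eq_sub_of_hasDerivAt (fun t ht => ?_) ?_
    · rw [Set.uIcc_of_le h32x] at ht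
      exact hGd t ht.1
    · refine ContinuousOn.intervalIntegrable ?_
      rwa [Set.uIcc_of_le h32x]
  have hhIoc : MeasureTheory.IntegrableOn h (Set.Ioc (3/2:ℝ) x) :=
    hhcont.integrableOn_Icc.mono_set Set.Ioc_subset_Icc_self
  set φ : ℝ → ℝ := fun t => -(deriv f t * A t) with hφ
  have hφmeas : Measurable φ := by
    refine ((measurable_deriv f).mul ?_).neg
    exact (measurable_from_nat (f := fun n : ℕ => ∑ k ∈ Icc 0 n, mc k)).comp Nat.measurable_floor
  have hφeq : ∀ t ∈ Set.Ioc (3/2:ℝ) x, φ t = A t / (t * (Real.log t)^2) := by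
    intro t ht
    have ht1 : (3/2:ℝ) ≤ t := ht.1.le
    have ht0 : (0:ℝ) < t := by linarith
    have hlt := hlogt t ht1
    rw [hφ]
    show -(deriv f t * A t) = A t / (t * (Real.log t)^2)
    rw [hfderiv t ht1]
    field_simp
  have hφ_nonneg : ∀ t ∈ Set.Ioc (3/2:ℝ) x, 0 ≤ φ t := by
    intro t ht
    rw [hφeq t ht]
    have ht0 : (0:ℝ) < t := by linarith [ht.1]
    have := hAnonneg t
    have := hlogt t ht.1.le
    positivity
  have hφ_le : ∀ t ∈ Set.Ioc (3/2:ℝ) x, φ t ≤ h t := by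
    intro t ht
    rw [hφeq t ht, hh]
    have ht0 : (0:ℝ) < t := by linarith [ht.1]
    have hlt := hlogt t ht.1.le
    have hden : (0:ℝ) < t * (Real.log t)^2 := by positivity
    exact (div_le_div_iff_of_pos_right hden).mpr (hAle t ht.1.le)
  
  have hφint : MeasureTheory.IntegrableOn φ (Set.Ioc (3/2:ℝ) x) := by
    refine MeasureTheory.Integrable.mono' hhIoc hφmeas.aestronglyMeasurable ?_
    refine (MeasureTheory.ae_restrict_iff' measurableSet_Ioc).mpr
      (Filter.Eventually.of_forall fun t ht => ?_)
    rw [Real.norm_eq_abs, abs_of_nonneg (hφ_nonneg t ht)]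
    exact hφ_le t ht
  have hloglogx : Real.log (Real.log (3/2)) ≤ Real.log (Real.log x) :=
    Real.log_le_log hlog32 (Real.log_le_log (by norm_num) h32x)
  have hkey : -(∫ t in Set.Ioc (3/2:ℝ) x, deriv f t * A t) ≤
      Real.log (Real.log x) + (Real.log 4 / Real.log (3/2) - Real.log (Real.log (3/2))) := by
    have e1 : -(∫ t in Set.Ioc (3/2:ℝ) x, deriv f t * A t) = ∫ t in Set.Ioc (3/2:ℝ) x, φ t := by
      rw [hφ, MeasureTheory.integral_neg]
    rw [e1]
    calc ∫ t in Set.Ioc (3/2:ℝ) x, φ t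
        ≤ ∫ t in Set.Ioc (3/2:ℝ) x, h t :=
          MeasureTheory.setIntegral_mono_on hφint hhIoc measurableSet_Ioc hφ_le
      _ = ∫ t in (3/2:ℝ)..x, h t := (intervalIntegral.integral_of_le h32x).symm
      _ = G x - G (3/2) := hFTC
      _ ≤ _ := by
          rw [hG]
          have hlx : 0 < Real.log x := Real.log_pos (by linarith)
          have t1 : 0 ≤ Real.log 4 * (Real.log x)⁻¹ := by positivity
          have t2 : Real.log 4 * (Real.log (3/2))⁻¹ = Real.log 4 / Real.log (3/2) :=
            (div_eq_mul_inv (Real.log 4) (Real.log (3/2))).symm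
          simp only
          linarith
  have hxfl1 : 1 ≤ ⌊x⌋₊ := Nat.le_floor (by push_cast; linarith)
  have hsum_eq : (∑ k ∈ Icc 0 ⌊x⌋₊, (if k.Prime then (k:ℝ)⁻¹ else 0))
      = ∑ k ∈ Ioc 1 ⌊x⌋₊, f k * mc k := by
    have e1 : (∑ k ∈ Ioc 1 ⌊x⌋₊, (if k.Prime then (k:ℝ)⁻¹ else 0))
        = ∑ k ∈ Icc 0 ⌊x⌋₊, (if k.Prime then (k:ℝ)⁻¹ else 0) := by
      refine Finset.sum_subset (fun k hk => mem_Icc.mpr ⟨Nat.zero_le _, (mem_Ioc.mp hk).2⟩) ?_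
      intro k _ hnk
      have hk1 : k ≤ 1 := by
        by_contra hc
        exact hnk (mem_Ioc.mpr ⟨by omega, by
          rcases mem_Icc.mp (by assumption) with ⟨_, h2⟩
          exact h2⟩)
      interval_cases k
      · simp [Nat.not_prime_zero]
      · simp [Nat.not_prime_one]
    rw [← e1]
    refine Finset.sum_congr rfl (fun k hk => ?_)
    have hk1 : 1 < k := (mem_Ioc.mp hk).1
    by_cases hp : Nat.Prime k
    · have hlk : Real.log k ≠ 0 := (Real.log_pos (by exact_mod_cast hk1)).ne'
      have hk0 : (k:ℝ) ≠ 0 := by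
        have : 0 < k := by omega
        exact_mod_cast this.ne'
      rw [if_pos hp]
      show (k:ℝ)⁻¹ = (Real.log k)⁻¹ * mc k
      unfold mc
      rw [if_pos hp]
      field_simp
    · rw [if_neg hp]
      show (0:ℝ) = f k * mc k
      unfold mc
      rw [if_neg hp, mul_zero]
  rw [hsum_eq, habel', hA32, mul_zero, sub_zero]
  have hlx : 0 < Real.log x := Real.log_pos (by linarith)
  have hfxAx : f x * A x ≤ 1 + Real.log 4 / Real.log 2 := by
    have hAx := hAle x h32x
    calc f x * A x ≤ (Real.log x)⁻¹ * (Real.log x + Real.log 4) :=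
          mul_le_mul_of_nonneg_left hAx (by positivity)
      _ = 1 + Real.log 4 / Real.log x := by field_simp
      _ ≤ 1 + Real.log 4 / Real.log 2 := by
          have hle : Real.log 2 ≤ Real.log x := Real.log_le_log (by norm_num) hx
          have := div_le_div_of_nonneg_left hlog4 hlog2 hle
          linarith
  unfold K2
  have hsub : f x * A x - (∫ t in Set.Ioc (3/2:ℝ) x, deriv f t * A t) ≤
      (1 + Real.log 4 / Real.log 2) +
      (Real.log (Real.log x) + (Real.log 4 / Real.log (3/2) - Real.log (Real.log (3/2)))) := by
    linarith
  linarith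

private noncomputable def gfun (a : ℝ) (Q : ℕ) : ℕ →* ℝ where
  toFun m := if Nat.Coprime m Q then a ^ (cardFactors m) / m else 0
  map_one' := by simp [Nat.coprime_one_left]
  map_mul' m n := by
    by_cases hm : m = 0
    · subst hm; simp [div_zero]
    by_cases hn : n = 0
    · subst hn; simp [div_zero]
    by_cases hm' : Nat.Coprime m Q
    · by_cases hn' : Nat.Coprime n Q
      · rw [if_pos (Nat.Coprime.mul hm' hn'), if_pos hm', if_pos hn',
          cardFactors_mul hm hn, pow_add, div_mul_div_comm]
        push_cast
        ring
      · rw [if_neg hn', mul_zero, if_neg]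
        intro hc
        exact hn' (Nat.Coprime.coprime_dvd_left (dvd_mul_left n m) hc)
    · rw [if_neg hm', zero_mul, if_neg]
      intro hc
      exact hm' (Nat.Coprime.coprime_dvd_left (dvd_mul_right m n) hc)

theorem sum_coprime_primorial_bound (a : ℝ) (ha : 2 < a) :
    ∃ C : ℝ, 0 < C ∧ ∀ x : ℝ, 2 ≤ x →
      ∑ m ∈ (Finset.Icc 1 ⌊x⌋₊).filter
          (fun m => Nat.Coprime m (∏ p ∈ (Finset.Icc 1 ⌊a⌋₊).filter Nat.Prime, p)),
          a ^ (cardFactors m) / m ≤ C * Real.log x ^ a := by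
  classical
  have ha0 : (0:ℝ) < a := by linarith
  set Q : ℕ := ∏ p ∈ (Finset.Icc 1 ⌊a⌋₊).filter Nat.Prime, p with hQ
  have hfloor : a < (⌊a⌋₊ : ℝ) + 1 := Nat.lt_floor_add_one a
  set g : ℕ →* ℝ := gfun a Q with hg
  have hg_apply : ∀ m : ℕ, g m = if Nat.Coprime m Q then a ^ (cardFactors m) / m else 0 :=
    fun m => rfl
  have hgnonneg : ∀ m : ℕ, 0 ≤ g m := by
    intro m
    rw [hg_apply]
    split
    · positivity
    · exact le_refl 0
  have hgp_small : ∀ p : ℕ, p.Prime → p ≤ ⌊a⌋₊ → g p = 0 := by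
    intro p hp hle
    have hdvd : p ∣ Q := dvd_prod_of_mem _ (mem_filter.mpr ⟨mem_Icc.mpr ⟨hp.one_lt.le, hle⟩, hp⟩)
    rw [hg_apply, if_neg]
    intro hc
    exact (Nat.Prime.coprime_iff_not_dvd hp).mp hc hdvd
  have hgp_large : ∀ p : ℕ, p.Prime → ⌊a⌋₊ < p → g p = a / p ∧ a < (p:ℝ) := by
    intro p hp hlt
    have hple : a < (p:ℝ) := by
      have : (⌊a⌋₊:ℝ) + 1 ≤ p := by exact_mod_cast hlt
      linarith
    constructor
    · have hcop : Nat.Coprime p Q := by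
        rw [Nat.Prime.coprime_iff_not_dvd hp]
        intro hdvd
        obtain ⟨q, hq, hpq⟩ := (hp.prime.dvd_finset_prod_iff _).mp hdvd
        have hq' := mem_filter.mp hq
        have := (Nat.prime_dvd_prime_iff_eq hp hq'.2).mp hpq
        subst this
        exact absurd (mem_Icc.mp hq'.1).2 (by omega)
      rw [hg_apply, if_pos hcop, cardFactors_apply_prime hp, pow_one]
    · exact hple
  have hglt : ∀ {p : ℕ}, p.Prime → ‖g p‖ < 1 := by
    intro p hp
    rcases le_or_gt p ⌊a⌋₊ with h | h
    · rw [hgp_small p hp h]; simp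
    · obtain ⟨he, hgt⟩ := hgp_large p hp h
      have hp0 : (0:ℝ) < p := by linarith
      rw [he, Real.norm_eq_abs, abs_of_nonneg (by positivity), div_lt_one hp0]
      exact hgt
  have hKa : (0:ℝ) < (⌊a⌋₊:ℝ) + 1 - a := by linarith
  set Ka : ℝ := ((⌊a⌋₊:ℝ) + 1) / ((⌊a⌋₊:ℝ) + 1 - a) with hKadef
  have hKapos : 0 < Ka := by positivity
  refine ⟨Real.exp (a * K2 + Ka * a ^ 2), Real.exp_pos _, ?_⟩
  intro x hx
  have hlogx : 0 < Real.log x := Real.log_pos (by linarith)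
  set N : ℕ := ⌊x⌋₊ + 1 with hN
  obtain ⟨hsummable, hhs⟩ :=
    EulerProduct.summable_and_hasSum_smoothNumbers_prod_primesBelow_geometric (f := g) hglt N
  set P : ℝ := ∏ p ∈ N.primesBelow, (1 - g p)⁻¹ with hP
  have hS : (∑ m ∈ (Finset.Icc 1 ⌊x⌋₊).filter (fun m => Nat.Coprime m Q),
      a ^ (cardFactors m) / m) = ∑ m ∈ Icc 1 ⌊x⌋₊, g m := by
    rw [Finset.sum_filter]
    exact Finset.sum_congr rfl (fun m _ => (hg_apply m).symm)
  have hstep1 : ∑ m ∈ Icc 1 ⌊x⌋₊, g m ≤ P := by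
    have hind : HasSum (Set.indicator (N.smoothNumbers : Set ℕ) g) P :=
      hasSum_subtype_iff_indicator.mp hhs
    have hson : ∀ m ∈ Icc 1 ⌊x⌋₊, Set.indicator (N.smoothNumbers : Set ℕ) (⇑g) m = g m := by
      intro m hm
      apply Set.indicator_of_mem
      rw [Nat.mem_smoothNumbers']
      intro p hp hpd
      have hm1 := (mem_Icc.mp hm).1
      have h1 := Nat.le_of_dvd (by omega) hpd
      have h2 := (mem_Icc.mp hm).2
      omega
    calc ∑ m ∈ Icc 1 ⌊x⌋₊, g m
        = ∑ m ∈ Icc 1 ⌊x⌋₊, Set.indicator (N.smoothNumbers : Set ℕ) (⇑g) m :=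
          (Finset.sum_congr rfl hson).symm
      _ ≤ P := sum_le_hasSum _
          (fun m _ => Set.indicator_apply_nonneg (fun _ => hgnonneg m)) hind
  have hfacpos : ∀ p ∈ N.primesBelow, (0:ℝ) < (1 - g p)⁻¹ := by
    intro p hp
    have h1 := hglt (Nat.prime_of_mem_primesBelow hp)
    rw [Real.norm_eq_abs, abs_of_nonneg (hgnonneg p)] at h1
    have : 0 < 1 - g p := by linarith
    positivity
  have hPpos : 0 < P := Finset.prod_pos hfacpos
  have hlogP : Real.log P = ∑ p ∈ N.primesBelow, Real.log (1 - g p)⁻¹ :=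
    Real.log_prod (fun p hp => (hfacpos p hp).ne')
  have hterm : ∀ p ∈ N.primesBelow,
      Real.log (1 - g p)⁻¹ ≤ a * (p:ℝ)⁻¹ + (Ka * a ^ 2) * ((p:ℝ)⁻¹) ^ 2 := by
    intro p hp
    have hpp := Nat.prime_of_mem_primesBelow hp
    have hp0 : (0:ℝ) < p := by exact_mod_cast hpp.pos
    rcases le_or_gt p ⌊a⌋₊ with h | h
    · rw [hgp_small p hpp h]
      simp only [sub_zero, inv_one, Real.log_one]
      positivity
    · obtain ⟨he, hgt⟩ := hgp_large p hpp h
      have hplow : (⌊a⌋₊:ℝ) + 1 ≤ p := by exact_mod_cast h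
      have hs0 : 0 ≤ a / p := by positivity
      have hs1 : a / p < 1 := (div_lt_one hp0).mpr hgt
      have hK1 : 1 ≤ Ka * (1 - a / p) := by
        have h1 : a / p ≤ a / ((⌊a⌋₊:ℝ) + 1) :=
          div_le_div_of_nonneg_left ha0.le (by positivity) hplow
        have h2 : Ka * (1 - a / ((⌊a⌋₊:ℝ) + 1)) = 1 := by
          rw [hKadef]
          field_simp
        nlinarith
      have hb := log_inv_one_sub_le hs0 hs1 hK1
      rw [he]
      calc Real.log (1 - a / p)⁻¹ ≤ a / p + Ka * (a / p) ^ 2 := hb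
        _ = a * (p:ℝ)⁻¹ + (Ka * a ^ 2) * ((p:ℝ)⁻¹) ^ 2 := by
            field_simp
  have hsum1 : ∑ p ∈ N.primesBelow, (p:ℝ)⁻¹ ≤ Real.log (Real.log x) + K2 := by
    have e1 : ∑ p ∈ N.primesBelow, (p:ℝ)⁻¹
        = ∑ k ∈ Icc 0 ⌊x⌋₊, (if k.Prime then (k:ℝ)⁻¹ else 0) := by
      rw [show N.primesBelow = (range N).filter Nat.Prime from rfl, ← Finset.sum_filter, hN,
        ← Nat.Ico_zero_eq_range, Finset.Ico_add_one_right_eq_Icc]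
    rw [e1]
    exact mertens2 x hx
  have hsum2 : ∑ p ∈ N.primesBelow, ((p:ℝ)⁻¹) ^ 2 ≤ 1 := by
    refine le_trans (Finset.sum_le_sum_of_subset_of_nonneg ?_ ?_) (sq_inv_sum_le ⌊x⌋₊)
    · intro p hp
      have hpp := Nat.prime_of_mem_primesBelow hp
      have := Nat.lt_of_mem_primesBelow hp
      exact mem_Icc.mpr ⟨hpp.two_le, by omega⟩
    · intro p _ _
      positivity
  have hlogP_le : Real.log P ≤ a * Real.log (Real.log x) + (a * K2 + Ka * a ^ 2) := by
    rw [hlogP]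
    calc ∑ p ∈ N.primesBelow, Real.log (1 - g p)⁻¹
        ≤ ∑ p ∈ N.primesBelow, (a * (p:ℝ)⁻¹ + (Ka * a ^ 2) * ((p:ℝ)⁻¹) ^ 2) :=
          Finset.sum_le_sum hterm
      _ = a * (∑ p ∈ N.primesBelow, (p:ℝ)⁻¹)
          + (Ka * a ^ 2) * ∑ p ∈ N.primesBelow, ((p:ℝ)⁻¹) ^ 2 := by
          rw [Finset.sum_add_distrib, Finset.mul_sum, Finset.mul_sum]
      _ ≤ a * (Real.log (Real.log x) + K2) + (Ka * a ^ 2) * 1 := by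
          have h1 := mul_le_mul_of_nonneg_left hsum1 ha0.le
          have h2 := mul_le_mul_of_nonneg_left hsum2 (by positivity : (0:ℝ) ≤ Ka * a ^ 2)
          linarith
      _ = a * Real.log (Real.log x) + (a * K2 + Ka * a ^ 2) := by ring
  have hPle : P ≤ Real.exp (a * K2 + Ka * a ^ 2) * Real.log x ^ a := by
    have e2 : Real.log x ^ a = Real.exp (Real.log (Real.log x) * a) :=
      Real.rpow_def_of_pos hlogx a
    calc P = Real.exp (Real.log P) := (Real.exp_log hPpos).symm
      _ ≤ Real.exp (a * Real.log (Real.log x) + (a * K2 + Ka * a ^ 2)) :=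
          Real.exp_le_exp.mpr hlogP_le
      _ = Real.exp (a * K2 + Ka * a ^ 2) * Real.log x ^ a := by
          rw [Real.exp_add, e2, mul_comm (Real.log (Real.log x)) a]
          ring
  calc ∑ m ∈ (Finset.Icc 1 ⌊x⌋₊).filter (fun m => Nat.Coprime m Q), a ^ (cardFactors m) / m
      = ∑ m ∈ Icc 1 ⌊x⌋₊, g m := hS
    _ ≤ P := hstep1
    _ ≤ Real.exp (a * K2 + Ka * a ^ 2) * Real.log x ^ a := hPle
end
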